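/- Let (S, A, T, γ) be a finite MDP with γ ∈ [0,1], horizon T_h ≥ 1 and deterministic dynamics given by N : S × A → S. Let φ : S × A → ℝ^d be a feature map and for θ ∈ ℝ^d let π_{θ,t} be the soft-VI policy for the linear reward r_θ(s,a) = θᵀφ(s,a). Then for every feasible trajectory τ = (s_0, a_0, s_1, a_1, …, s_{T_h−1}, a_{T_h−1}) (i.e. s_{t+1} = N(s_t, a_t) for all t), the discounted log-likelihood θ ↦ Σ_{t=0}^{T_h−1} γ^t log π_{θ,t}(a_t|s_t) is differentiable and its gradient equals the feature-expectation gap: Σ_{t=0}^{T_h−1} γ^t φ(s_t, a_t) − E_{π_θ}[ Σ_{t=0}^{T_h−1} γ^t φ(S_t, A_t) | S_0 = s_0 ]. -/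

import Mathlib

/-! STATEMENT 3: in a deterministic MDP, the gradient of the discounted log-likelihood of a
feasible trajectory under the soft-VI (MCE) policy equals the feature-expectation gap. -/

open scoped RealInnerProductSpace

/-- Soft value iteration, indexed by the number of remaining steps after the current one:
`softQ T γ r k = Q_{Th-1-k}` when the horizon is `Th`.  Thus `softQ T γ r 0 s a = r s a`
(the last step `t = Th-1`) and
`softQ T γ r (k+1) s a = r s a + γ ∑_{s'} T(s'|s,a) V(k, s')`. -/
noncomputable def softQ {S A : Type*} [Fintype S] [Fintype A]
    (T : S → A → S → ℝ) (γ : ℝ) (r : S → A → ℝ) : ℕ → S → A → ℝ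
  | 0 => fun s a => r s a
  | k + 1 => fun s a =>
      r s a + γ * ∑ s', T s a s' * Real.log (∑ a', Real.exp (softQ T γ r k s' a'))

/-- Soft state-value: `V(s) = log ∑_a exp Q(s,a)` (indexed by remaining steps). -/
noncomputable def softV {S A : Type*} [Fintype S] [Fintype A]
    (T : S → A → S → ℝ) (γ : ℝ) (r : S → A → ℝ) (k : ℕ) (s : S) : ℝ :=
  Real.log (∑ a, Real.exp (softQ T γ r k s a))

/-- `expSumV T π φ t k s` is the (vector-valued) expectation
`E_π[ ∑_{t'=t}^{t+k-1} φ t' S_{t'} A_{t'} | S_t = s ]` over trajectories generated from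
state `s` at time `t` by the time-dependent policy `π` and transitions `T`. -/
noncomputable def expSumV {S A : Type*} [Fintype S] [Fintype A] {d : ℕ}
    (T : S → A → S → ℝ) (π : ℕ → S → A → ℝ)
    (φ : ℕ → S → A → EuclideanSpace ℝ (Fin d)) : ℕ → ℕ → S → EuclideanSpace ℝ (Fin d)
  | _, 0, _ => 0
  | t, k + 1, s => ∑ a, π t s a • (φ t s a + ∑ s', T s a s' • expSumV T π φ (t + 1) k s')

section
variable {F : Type*} [NormedAddCommGroup F] [InnerProductSpace ℝ F] [CompleteSpace F]
variable {f g : F → ℝ} {u v x : F}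

lemma myInner_hasGradientAt (v x : F) : HasGradientAt (fun y => ⟪y, v⟫) v x := by
  have hfun : (fun y : F => ⟪y, v⟫) = fun y => (InnerProductSpace.toDual ℝ F v) y := by
    funext y
    rw [InnerProductSpace.toDual_apply_apply, real_inner_comm]
  rw [hasGradientAt_iff_hasFDerivAt, hfun]
  exact (InnerProductSpace.toDual ℝ F v).hasFDerivAt

lemma HGA_add {f₁ f₂ : F → ℝ} {g₁ g₂ : F} (h₁ : HasGradientAt f₁ g₁ x) (h₂ : HasGradientAt f₂ g₂ x) :
    HasGradientAt (fun y => f₁ y + f₂ y) (g₁ + g₂) x := by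
  rw [hasGradientAt_iff_hasFDerivAt] at h₁ h₂ ⊢
  rw [map_add]
  exact h₁.add h₂

lemma HGA_sub {f₁ f₂ : F → ℝ} {g₁ g₂ : F} (h₁ : HasGradientAt f₁ g₁ x) (h₂ : HasGradientAt f₂ g₂ x) :
    HasGradientAt (fun y => f₁ y - f₂ y) (g₁ - g₂) x := by
  rw [hasGradientAt_iff_hasFDerivAt] at h₁ h₂ ⊢
  rw [map_sub]
  exact h₁.sub h₂

lemma HGA_const_mul {f₁ : F → ℝ} {g₁ : F} (c : ℝ) (h₁ : HasGradientAt f₁ g₁ x) :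
    HasGradientAt (fun y => c * f₁ y) (c • g₁) x := by
  rw [hasGradientAt_iff_hasFDerivAt] at h₁ ⊢
  rw [map_smul]
  exact h₁.const_mul c

lemma HGA_sum {ι : Type*} (u : Finset ι) (f : ι → F → ℝ) (g : ι → F) (x : F)
    (h : ∀ i ∈ u, HasGradientAt (f i) (g i) x) :
    HasGradientAt (fun y => ∑ i ∈ u, f i y) (∑ i ∈ u, g i) x := by
  rw [hasGradientAt_iff_hasFDerivAt, map_sum]
  exact HasFDerivAt.fun_sum (fun i hi => h i hi)

lemma HGA_comp_deriv {h : ℝ → ℝ} {d : ℝ} {g₀ : F} (hh : HasDerivAt h d (f x)) (hf : HasGradientAt f g₀ x) :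
    HasGradientAt (fun y => h (f y)) (d • g₀) x := by
  rw [hasGradientAt_iff_hasFDerivAt] at hf ⊢
  rw [map_smul]
  exact hh.comp_hasFDerivAt x hf

lemma grad_logSumExp {A : Type*} [Fintype A] [Nonempty A]
    (f : A → F → ℝ) (g : A → F) (x : F)
    (h : ∀ a, HasGradientAt (f a) (g a) x) :
    HasGradientAt (fun y => Real.log (∑ a, Real.exp (f a y)))
      (∑ a, Real.exp (f a x - Real.log (∑ a', Real.exp (f a' x))) • g a) x := by
  have hpos : 0 < ∑ a, Real.exp (f a x) :=
    Finset.sum_pos (fun a _ => Real.exp_pos _) Finset.univ_nonempty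
  have hsum : HasGradientAt (fun y => ∑ a, Real.exp (f a y)) (∑ a, Real.exp (f a x) • g a) x :=
    HGA_sum _ _ _ _ (fun a _ => HGA_comp_deriv (Real.hasDerivAt_exp _) (h a))
  have hlog := HGA_comp_deriv (f := fun y => ∑ a, Real.exp (f a y)) (Real.hasDerivAt_log hpos.ne') hsum
  convert hlog using 1
  rw [Finset.smul_sum]
  refine Finset.sum_congr rfl fun a _ => ?_
  rw [smul_smul, Real.exp_sub, Real.exp_log hpos, div_eq_inv_mul]
end

section defsQV
variable {S A : Type*} [Fintype S] [Fintype A] {F : Type*} [NormedAddCommGroup F]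
  [InnerProductSpace ℝ F]

noncomputable def gV (T : S → A → S → ℝ) (γ : ℝ) (φ : S → A → F) (θ : F) : ℕ → S → F
  | 0 => fun s => ∑ a, Real.exp (softQ T γ (fun s a => ⟪θ, φ s a⟫) 0 s a
      - softV T γ (fun s a => ⟪θ, φ s a⟫) 0 s) • φ s a
  | k + 1 => fun s => ∑ a, Real.exp (softQ T γ (fun s a => ⟪θ, φ s a⟫) (k+1) s a
      - softV T γ (fun s a => ⟪θ, φ s a⟫) (k+1) s) •
      (φ s a + γ • ∑ s', T s a s' • gV T γ φ θ k s')

noncomputable def gQ (T : S → A → S → ℝ) (γ : ℝ) (φ : S → A → F) (θ : F) : ℕ → S → A → F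
  | 0 => fun s a => φ s a
  | k + 1 => fun s a => φ s a + γ • ∑ s', T s a s' • gV T γ φ θ k s'

lemma gV_eq (T : S → A → S → ℝ) (γ : ℝ) (φ : S → A → F) (θ : F) (k : ℕ) (s : S) :
    gV T γ φ θ k s = ∑ a, Real.exp (softQ T γ (fun s a => ⟪θ, φ s a⟫) k s a
      - softV T γ (fun s a => ⟪θ, φ s a⟫) k s) • gQ T γ φ θ k s a := by
  cases k <;> rfl

end defsQV

section gradlem
variable {S A : Type*} [Fintype S] [Fintype A] [Nonempty A] {F : Type*} [NormedAddCommGroup F]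
  [InnerProductSpace ℝ F] [CompleteSpace F]

lemma gradQ_V (T : S → A → S → ℝ) (γ : ℝ) (φ : S → A → F) (θ : F) (k : ℕ) :
    (∀ s a, HasGradientAt (fun θ' => softQ T γ (fun s a => ⟪θ', φ s a⟫) k s a)
        (gQ T γ φ θ k s a) θ) ∧
    (∀ s, HasGradientAt (fun θ' => softV T γ (fun s a => ⟪θ', φ s a⟫) k s)
        (gV T γ φ θ k s) θ) := by
  induction k with
  | zero =>
    have hQ : ∀ s a, HasGradientAt (fun θ' => softQ T γ (fun s a => ⟪θ', φ s a⟫) 0 s a)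
        (gQ T γ φ θ 0 s a) θ := by
      intro s a
      simp only [softQ, gQ]
      exact myInner_hasGradientAt (φ s a) θ
    refine ⟨hQ, fun s => ?_⟩
    rw [gV_eq]
    simp only [softV]
    exact grad_logSumExp _ _ _ (fun a => hQ s a)
  | succ k ih =>
    have hQ : ∀ s a, HasGradientAt (fun θ' => softQ T γ (fun s a => ⟪θ', φ s a⟫) (k+1) s a)
        (gQ T γ φ θ (k+1) s a) θ := by
      intro s a
      have h1 := myInner_hasGradientAt (φ s a) θ
      have h2 : HasGradientAt
          (fun θ' => ∑ s', T s a s' * softV T γ (fun s a => ⟪θ', φ s a⟫) k s')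
          (∑ s', T s a s' • gV T γ φ θ k s') θ :=
        HGA_sum _ _ _ _ (fun s' _ => HGA_const_mul _ (ih.2 s'))
      have h3 := HGA_add h1 (HGA_const_mul γ h2)
      simp only [softV] at h3
      simp only [softQ, gQ]
      exact h3
    refine ⟨hQ, fun s => ?_⟩
    rw [gV_eq]
    simp only [softV]
    exact grad_logSumExp _ _ _ (fun a => hQ s a)

end gradlem

section main
variable {S A : Type*} [Fintype S] [Fintype A] [Nonempty A] {d : ℕ}

lemma expSumV_gV (T : S → A → S → ℝ) (γ : ℝ) (φ : S → A → EuclideanSpace ℝ (Fin d))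
    (θ : EuclideanSpace ℝ (Fin d)) (Th : ℕ) :
    ∀ k t s, t + k + 1 = Th →
      expSumV T
        (fun t' s' a => Real.exp (softQ T γ (fun s a => ⟪θ, φ s a⟫) (Th - 1 - t') s' a
            - softV T γ (fun s a => ⟪θ, φ s a⟫) (Th - 1 - t') s'))
        (fun t' s' a => γ ^ t' • φ s' a) t (k+1) s
      = γ ^ t • gV T γ φ θ k s := by
  intro k
  induction k with
  | zero =>
    intro t s ht
    have h0 : Th - 1 - t = 0 := by omega
    simp only [expSumV, h0, smul_zero, Finset.sum_const_zero, add_zero, gV, Finset.smul_sum]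
    exact Finset.sum_congr rfl fun a _ => smul_comm _ _ _
  | succ k ih =>
    intro t s ht
    have hk : Th - 1 - t = k + 1 := by omega
    have hrec : ∀ s', expSumV T
        (fun t' s' a => Real.exp (softQ T γ (fun s a => ⟪θ, φ s a⟫) (Th - 1 - t') s' a
            - softV T γ (fun s a => ⟪θ, φ s a⟫) (Th - 1 - t') s'))
        (fun t' s' a => γ ^ t' • φ s' a) (t+1) (k+1) s'
        = γ ^ (t+1) • gV T γ φ θ k s' := fun s' => ih (t+1) s' (by omega)
    rw [expSumV]
    simp only [hrec, hk]
    rw [gV, Finset.smul_sum]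
    refine Finset.sum_congr rfl fun a _ => ?_
    have hin : ∑ s', T s a s' • (γ ^ (t+1) • gV T γ φ θ k s')
        = γ ^ (t+1) • ∑ s', T s a s' • gV T γ φ θ k s' := by
      rw [Finset.smul_sum]
      exact Finset.sum_congr rfl fun s' _ => smul_comm _ _ _
    rw [hin, pow_succ, mul_smul, ← smul_add]
    exact smul_comm _ _ _

end main

theorem stmt3 {S A : Type*} [Fintype S] [Fintype A] [DecidableEq S] [Nonempty S] [Nonempty A] {d : ℕ}
    (T : S → A → S → ℝ)
    (hT0 : ∀ s a s', 0 ≤ T s a s') (hT1 : ∀ s a, ∑ s', T s a s' = 1)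
    (γ : ℝ) (hγ : γ ∈ Set.Icc (0 : ℝ) 1)
    (Th : ℕ) (hTh : 1 ≤ Th)
    -- deterministic dynamics given by `N`
    (N : S → A → S) (hdet : ∀ s a s', T s a s' = if s' = N s a then 1 else 0)
    (φ : S → A → EuclideanSpace ℝ (Fin d)) (θ : EuclideanSpace ℝ (Fin d))
    -- a feasible trajectory `(σs 0, as 0, σs 1, as 1, …, σs (Th-1), as (Th-1))`
    (σs : ℕ → S) (as : ℕ → A)
    (hfeas : ∀ t, t + 1 < Th → σs (t + 1) = N (σs t) (as t)) :
    -- `θ' ↦ ∑_t γ^t log π_{θ',t}(a_t|s_t)` is differentiable at `θ`, with gradient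
    -- `∑_t γ^t φ(s_t,a_t) − E_{π_θ}[ ∑_t γ^t φ(S_t,A_t) | S_0 = σs 0 ]`.
    HasGradientAt
      (fun θ' : EuclideanSpace ℝ (Fin d) =>
        ∑ t ∈ Finset.range Th, γ ^ t *
          Real.log (Real.exp (softQ T γ (fun s a => ⟪θ', φ s a⟫) (Th - 1 - t) (σs t) (as t)
            - softV T γ (fun s a => ⟪θ', φ s a⟫) (Th - 1 - t) (σs t))))
      ((∑ t ∈ Finset.range Th, γ ^ t • φ (σs t) (as t)) -
        expSumV T
          (fun t' s' a => Real.exp (softQ T γ (fun s a => ⟪θ, φ s a⟫) (Th - 1 - t') s' a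
              - softV T γ (fun s a => ⟪θ, φ s a⟫) (Th - 1 - t') s'))
          (fun t' s' a => γ ^ t' • φ s' a) 0 Th (σs 0))
      θ := by
  classical
  have hterm : ∀ t ∈ Finset.range Th, HasGradientAt
      (fun θ' : EuclideanSpace ℝ (Fin d) =>
        γ ^ t * (softQ T γ (fun s a => ⟪θ', φ s a⟫) (Th - 1 - t) (σs t) (as t)
          - softV T γ (fun s a => ⟪θ', φ s a⟫) (Th - 1 - t) (σs t)))
      (γ ^ t • (gQ T γ φ θ (Th - 1 - t) (σs t) (as t) - gV T γ φ θ (Th - 1 - t) (σs t))) θ :=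
    fun t _ => HGA_const_mul _
      (HGA_sub ((gradQ_V T γ φ θ _).1 _ _) ((gradQ_V T γ φ θ _).2 _))
  have hsum : HasGradientAt
      (fun θ' : EuclideanSpace ℝ (Fin d) =>
        ∑ t ∈ Finset.range Th,
          γ ^ t * (softQ T γ (fun s a => ⟪θ', φ s a⟫) (Th - 1 - t) (σs t) (as t)
            - softV T γ (fun s a => ⟪θ', φ s a⟫) (Th - 1 - t) (σs t)))
      (∑ t ∈ Finset.range Th,
        γ ^ t • (gQ T γ φ θ (Th - 1 - t) (σs t) (as t) - gV T γ φ θ (Th - 1 - t) (σs t))) θ :=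
    HGA_sum _ _ _ θ hterm
  -- define the tail function
  set Fk : ℕ → EuclideanSpace ℝ (Fin d) := fun t =>
    if t < Th then
      expSumV T
        (fun t' s' a => Real.exp (softQ T γ (fun s a => ⟪θ, φ s a⟫) (Th - 1 - t') s' a
            - softV T γ (fun s a => ⟪θ, φ s a⟫) (Th - 1 - t') s'))
        (fun t' s' a => γ ^ t' • φ s' a) t (Th - t) (σs t)
    else 0 with hFk
  have claim1 : ∀ t, t < Th → γ ^ t • gV T γ φ θ (Th - 1 - t) (σs t) = Fk t := by
    intro t ht
    have h1 : Th - t = (Th - 1 - t) + 1 := by omega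
    rw [hFk]
    simp only [if_pos ht, h1]
    exact (expSumV_gV T γ φ θ Th (Th - 1 - t) t (σs t) (by omega)).symm
  have claim2 : ∀ t, t < Th →
      γ ^ t • gQ T γ φ θ (Th - 1 - t) (σs t) (as t)
        = γ ^ t • φ (σs t) (as t) + Fk (t + 1) := by
    intro t ht
    rcases eq_or_lt_of_le (Nat.succ_le_of_lt ht) with h | h
    · have h0 : Th - 1 - t = 0 := by omega
      have hF : Fk (t + 1) = 0 := by rw [hFk]; simp [show ¬ (t + 1 < Th) by omega]
      rw [h0, hF, add_zero]
      rfl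
    · have hm : Th - 1 - t = (Th - 1 - (t + 1)) + 1 := by omega
      have hTsum : ∑ s', T (σs t) (as t) s' • gV T γ φ θ (Th - 1 - (t + 1)) s'
          = gV T γ φ θ (Th - 1 - (t + 1)) (σs (t + 1)) := by
        rw [hfeas t h]
        simp [hdet, ite_smul]
      have hF : Fk (t + 1) = γ ^ (t + 1) • gV T γ φ θ (Th - 1 - (t + 1)) (σs (t + 1)) := by
        rw [hFk]
        simp only [if_pos h, show Th - (t + 1) = (Th - 1 - (t + 1)) + 1 by omega]
        exact expSumV_gV T γ φ θ Th (Th - 1 - (t + 1)) (t + 1) (σs (t + 1)) (by omega)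
      rw [hm]
      simp only [gQ]
      rw [hTsum, hF, smul_add, smul_smul, ← pow_succ]
  have key : ∑ t ∈ Finset.range Th,
        γ ^ t • (gQ T γ φ θ (Th - 1 - t) (σs t) (as t) - gV T γ φ θ (Th - 1 - t) (σs t))
      = (∑ t ∈ Finset.range Th, γ ^ t • φ (σs t) (as t)) -
        expSumV T
          (fun t' s' a => Real.exp (softQ T γ (fun s a => ⟪θ, φ s a⟫) (Th - 1 - t') s' a
              - softV T γ (fun s a => ⟪θ, φ s a⟫) (Th - 1 - t') s'))
          (fun t' s' a => γ ^ t' • φ s' a) 0 Th (σs 0) := by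
    have hsplit : ∀ t ∈ Finset.range Th,
        γ ^ t • (gQ T γ φ θ (Th - 1 - t) (σs t) (as t) - gV T γ φ θ (Th - 1 - t) (σs t))
          = γ ^ t • φ (σs t) (as t) + (Fk (t + 1) - Fk t) := by
      intro t ht
      rw [smul_sub, claim2 t (Finset.mem_range.mp ht), claim1 t (Finset.mem_range.mp ht)]
      abel
    rw [Finset.sum_congr rfl hsplit, Finset.sum_add_distrib, Finset.sum_range_sub]
    have hTh0 : Fk Th = 0 := by rw [hFk]; simp
    have hF0 : Fk 0 = expSumV T
        (fun t' s' a => Real.exp (softQ T γ (fun s a => ⟪θ, φ s a⟫) (Th - 1 - t') s' a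
            - softV T γ (fun s a => ⟪θ, φ s a⟫) (Th - 1 - t') s'))
        (fun t' s' a => γ ^ t' • φ s' a) 0 Th (σs 0) := by
      rw [hFk]
      simp only [Nat.sub_zero, if_pos (by omega : 0 < Th)]
    rw [hTh0, hF0]
    abel
  simp only [Real.log_exp]
  rw [← key]
  exact hsum
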